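/- Let d ≥ 1, let 𝒪 ⊆ ℝ^d be a measurable set of finite Lebesgue measure, let q ≥ 2 be a real number, and let f : ℝ → ℝ be continuous, satisfying the one-sided Lipschitz condition with constant L_f ∈ ℝ (i.e., (f(x) − f(y))(x − y) ≤ L_f (x − y)² for all x, y ∈ ℝ) and the polynomial growth bound |f(x)| ≤ C₀(1 + |x|^{q−1}) for all x ∈ ℝ with some C₀ ≥ 0. Then there exists a constant C ≥ 0, depending only on f and on the Lebesgue measure of 𝒪, such that for every u ∈ L^q(𝒪), the function x ↦ f(u(x))·u(x) is Lebesgue integrable on 𝒪 and ∫_𝒪 f(u(x)) u(x) dx ≤ C (1 + ∫_𝒪 u(x)² dx). -/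

import Mathlib

open MeasureTheory

/-- The coercivity property (2.11) of the Nemytskii operator: if `f : ℝ → ℝ` is
continuous, one-sided Lipschitz with constant `L_f`, and grows polynomially of order
`q - 1`, then there is a constant `C ≥ 0` (depending only on `f` and on the measure of
`𝒪`) such that for every `u ∈ L^q(𝒪)`, the function `x ↦ f (u x) * u x` is integrable
on `𝒪` and `∫_𝒪 f (u x) u x dx ≤ C (1 + ∫_𝒪 (u x)² dx)`. -/
theorem nemytskii_coercive
    (d : ℕ) (hd : 1 ≤ d) (O : Set (Fin d → ℝ)) (hO : MeasurableSet O)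
    (hOfin : volume O < ⊤)
    (q : ℝ) (hq : 2 ≤ q) (Lf : ℝ) (C₀ : ℝ) (hC₀ : 0 ≤ C₀)
    (f : ℝ → ℝ) (hf : Continuous f)
    (hmon : ∀ x y : ℝ, (f x - f y) * (x - y) ≤ Lf * (x - y) ^ 2)
    (hgrow : ∀ x : ℝ, |f x| ≤ C₀ * (1 + |x| ^ (q - 1))) :
    ∃ C : ℝ, 0 ≤ C ∧
      ∀ u : (Fin d → ℝ) → ℝ, Measurable u →
        IntegrableOn (fun x => |u x| ^ q) O volume →
        IntegrableOn (fun x => f (u x) * u x) O volume ∧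
          ∫ x in O, f (u x) * u x ≤ C * (1 + ∫ x in O, (u x) ^ 2) := by
  set A : ℝ := max Lf 0 + |f 0| with hA
  have hA0 : 0 ≤ A := add_nonneg (le_max_right _ _) (abs_nonneg _)
  set M : ℝ := max 1 (volume O).toReal with hM
  have hM1 : (1:ℝ) ≤ M := le_max_left _ _
  have hμM : (volume O).toReal ≤ M := le_max_right _ _
  refine ⟨A * M, mul_nonneg hA0 (le_trans zero_le_one hM1), ?_⟩
  intro u hu hint
  -- pointwise coercivity bound
  have hpt : ∀ x : ℝ, f x * x ≤ A * (1 + x ^ 2) := by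
    intro x
    have h1 := hmon x 0
    simp only [sub_zero] at h1
    have h2 : f 0 * x ≤ |f 0| * (1 + x ^ 2) := by
      have : f 0 * x ≤ |f 0| * |x| := by
        calc f 0 * x ≤ |f 0 * x| := le_abs_self _
        _ = |f 0| * |x| := abs_mul _ _
      nlinarith [abs_nonneg (f 0), sq_abs x, sq_nonneg (|x| - 1)]
    have h3 : Lf * x ^ 2 ≤ max Lf 0 * x ^ 2 :=
      mul_le_mul_of_nonneg_right (le_max_left _ _) (sq_nonneg x)
    nlinarith [le_max_right Lf 0, sq_nonneg x]
  -- auxiliary pointwise bounds for integrability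
  have habs : ∀ x : ℝ, |x| ≤ 1 + |x| ^ q := by
    intro x
    rcases le_total (|x|) 1 with h | h
    · have : (0:ℝ) ≤ |x| ^ q := Real.rpow_nonneg (abs_nonneg x) q
      linarith
    · have h2 : |x| ≤ |x| ^ q := by
        calc |x| = |x| ^ (1:ℝ) := (Real.rpow_one _).symm
        _ ≤ |x| ^ q := Real.rpow_le_rpow_of_exponent_le h (by linarith)
      linarith
  have hsq : ∀ x : ℝ, x ^ 2 ≤ 1 + |x| ^ q := by
    intro x
    rcases le_total (|x|) 1 with h | h
    · have h2 : x ^ 2 ≤ 1 := by nlinarith [sq_abs x, abs_nonneg x]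
      have : (0:ℝ) ≤ |x| ^ q := Real.rpow_nonneg (abs_nonneg x) q
      linarith
    · have h1 : x ^ 2 = |x| ^ ((2:ℕ):ℝ) := by
        rw [Real.rpow_natCast, sq_abs]
      have h2 : x ^ 2 ≤ |x| ^ q := by
        rw [h1]
        exact Real.rpow_le_rpow_of_exponent_le h (by push_cast; linarith)
      linarith
  have hfb : ∀ x : ℝ, |f x * x| ≤ C₀ + 2 * C₀ * |x| ^ q := by
    intro x
    have h1 : |f x * x| = |f x| * |x| := abs_mul _ _
    have h2 : |f x| * |x| ≤ C₀ * (1 + |x| ^ (q - 1)) * |x| :=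
      mul_le_mul_of_nonneg_right (hgrow x) (abs_nonneg x)
    have h3 : |x| ^ (q - 1) * |x| = |x| ^ q := by
      have := (Real.rpow_add' (abs_nonneg x) (y := q - 1) (z := 1)
        (by intro h; linarith [sub_add_cancel q 1 ▸ h])).symm
      simpa [Real.rpow_one, sub_add_cancel] using this
    have h4 : C₀ * (1 + |x| ^ (q - 1)) * |x| = C₀ * |x| + C₀ * (|x| ^ (q-1) * |x|) := by
      ring
    have h5 : C₀ * |x| ≤ C₀ * (1 + |x| ^ q) :=
      mul_le_mul_of_nonneg_left (habs x) hC₀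
    rw [h1]
    calc |f x| * |x| ≤ C₀ * |x| + C₀ * (|x| ^ (q-1) * |x|) := by rw [← h4]; exact h2
    _ = C₀ * |x| + C₀ * |x| ^ q := by rw [h3]
    _ ≤ C₀ * (1 + |x| ^ q) + C₀ * |x| ^ q := by linarith
    _ = C₀ + 2 * C₀ * |x| ^ q := by ring
  -- integrability facts
  have hconst' : ∀ c : ℝ, IntegrableOn (fun _ : Fin d → ℝ => c) O volume := fun c =>
    integrableOn_const hOfin.ne
  have hdom : IntegrableOn (fun x => C₀ + 2 * C₀ * |u x| ^ q) O volume :=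
    (hconst' C₀).add ((hint.const_mul (2 * C₀)))
  have hmeas : AEStronglyMeasurable (fun x => f (u x) * u x) (volume.restrict O) :=
    (((hf.measurable.comp hu).mul hu).aestronglyMeasurable)
  have hI : IntegrableOn (fun x => f (u x) * u x) O volume := by
    refine Integrable.mono' hdom hmeas ?_
    exact Filter.Eventually.of_forall fun x => hfb (u x)
  refine ⟨hI, ?_⟩
  -- integrability of u^2
  have hsqI : IntegrableOn (fun x => (u x) ^ 2) O volume := by
    refine Integrable.mono' ((hconst' 1).add hint) ((hu.pow_const 2).aestronglyMeasurable) ?_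
    refine Filter.Eventually.of_forall fun x => ?_
    simp only [Pi.add_apply, Real.norm_eq_abs, abs_of_nonneg (sq_nonneg (u x))]
    exact hsq (u x)
  have hRHSint : IntegrableOn (fun x => A * (1 + (u x) ^ 2)) O volume :=
    (((hconst' 1).add hsqI).const_mul A)
  have hmono : ∫ x in O, f (u x) * u x ≤ ∫ x in O, A * (1 + (u x) ^ 2) := by
    refine setIntegral_mono_on hI hRHSint hO fun x _ => hpt (u x)
  have hIs : (0:ℝ) ≤ ∫ x in O, (u x) ^ 2 :=
    integral_nonneg fun x => sq_nonneg (u x)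
  have hcalc : ∫ x in O, A * (1 + (u x) ^ 2)
      = A * ((volume O).toReal + ∫ x in O, (u x) ^ 2) := by
    rw [integral_const_mul, integral_add (hconst' 1) hsqI]
    simp [setIntegral_const, Measure.real]
  rw [hcalc] at hmono
  have hfin : A * ((volume O).toReal + ∫ x in O, (u x) ^ 2)
      ≤ A * M * (1 + ∫ x in O, (u x) ^ 2) := by
    have hμ0 : (0:ℝ) ≤ (volume O).toReal := ENNReal.toReal_nonneg
    nlinarith [mul_nonneg hA0 hIs]
  linarith
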